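/- arXiv:nlin/0510044 — 6 statements merged into one kernel-verified Lean document; each statement's English description precedes it below -/
import Mathlib

section
/- Let λ : ℝ → ℝ be continuous, let χ₁, χ₂ : ℝ → ℝ be solutions of the Hill equation χ'' + λ(t)²χ = 0 with χ₁(0) = X₀ > 0, χ₁'(0) = Ẋ₀, χ₂(0) = 0, χ₂'(0) ≠ 0, and let w = χ₁(0)χ₂'(0) − χ₂(0)χ₁'(0). Then X(t) = √(χ₁(t)² + χ₂(t)²/w²) satisfies the Ermakov–Pinney equation X'' + λ(t)²X = 1/X³ with X(0) = X₀ and X'(0) = Ẋ₀, on any interval containing 0 where χ₁² + χ₂²/w² > 0. -/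
/-- Nonlinear superposition (Ermakov 1880): from two solutions of Hill's equation,
`X = √(χ₁² + χ₂²/w²)` solves the Ermakov–Pinney equation `X'' + λ(t)² X = 1/X³`. -/
theorem ermakov_nonlinear_superposition
    (lam : ℝ → ℝ) (hlam : Continuous lam)
    (χ₁ χ₂ χ₁' χ₂' : ℝ → ℝ) (X₀ Xd₀ : ℝ) (hX₀ : 0 < X₀)
    (h₁ : ∀ t, HasDerivAt χ₁ (χ₁' t) t)
    (h₁' : ∀ t, HasDerivAt χ₁' (-(lam t) ^ 2 * χ₁ t) t)
    (h₂ : ∀ t, HasDerivAt χ₂ (χ₂' t) t)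
    (h₂' : ∀ t, HasDerivAt χ₂' (-(lam t) ^ 2 * χ₂ t) t)
    (hi1 : χ₁ 0 = X₀) (hi1' : χ₁' 0 = Xd₀)
    (hi2 : χ₂ 0 = 0) (hi2' : χ₂' 0 ≠ 0)
    (w : ℝ) (hw : w = χ₁ 0 * χ₂' 0 - χ₂ 0 * χ₁' 0)
    (X : ℝ → ℝ) (hX : ∀ t, X t = Real.sqrt (χ₁ t ^ 2 + χ₂ t ^ 2 / w ^ 2)) :
    X 0 = X₀ ∧ deriv X 0 = Xd₀ ∧
    ∀ a b : ℝ, a < 0 → 0 < b →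
      (∀ t ∈ Set.Ioo a b, 0 < χ₁ t ^ 2 + χ₂ t ^ 2 / w ^ 2) →
      ∀ t ∈ Set.Ioo a b,
        deriv (deriv X) t + (lam t) ^ 2 * X t = 1 / (X t) ^ 3 := by
  have hw0 : w ≠ 0 := by
    rw [hw, hi1, hi2]; simpa using mul_ne_zero (ne_of_gt hX₀) hi2'
  -- Wronskian is constant
  have hW : ∀ t, χ₁ t * χ₂' t - χ₂ t * χ₁' t = w := by
    intro t
    have hd : ∀ s, HasDerivAt (fun r => χ₁ r * χ₂' r - χ₂ r * χ₁' r) 0 s := by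
      intro s
      have := ((h₁ s).mul (h₂' s)).sub ((h₂ s).mul (h₁' s))
      exact this.congr_deriv (by ring)
    have hdiff : Differentiable ℝ (fun r => χ₁ r * χ₂' r - χ₂ r * χ₁' r) :=
      fun s => (hd s).differentiableAt
    have := is_const_of_deriv_eq_zero hdiff (fun s => (hd s).deriv) t 0
    rw [hw]; exact this
  set u : ℝ → ℝ := fun s => χ₁ s ^ 2 + χ₂ s ^ 2 / w ^ 2 with hu_def
  set u' : ℝ → ℝ := fun s => 2 * χ₁ s * χ₁' s + 2 * χ₂ s * χ₂' s / w ^ 2 with hu'_def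
  have hu : ∀ s, HasDerivAt u (u' s) s := by
    intro s
    have := ((h₁ s).pow 2).add (((h₂ s).pow 2).div_const (w ^ 2))
    exact this.congr_deriv (by simp only [hu'_def]; ring)
  have hu' : ∀ s, HasDerivAt u'
      (2 * (χ₁' s ^ 2 + χ₂' s ^ 2 / w ^ 2) - 2 * (lam s) ^ 2 * u s) s := by
    intro s
    have h0 := (((h₁ s).mul (h₁' s)).const_mul 2).add
      ((((h₂ s).mul (h₂' s)).const_mul 2).div_const (w ^ 2))
    have he : u' = fun x => 2 * (χ₁ x * χ₁' x) + 2 * (χ₂ x * χ₂' x) / w ^ 2 := by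
      funext x; simp only [hu'_def]; ring
    rw [he]
    exact h0.congr_deriv (by simp only [hu_def]; field_simp; ring)
  have hXd : ∀ s, 0 < u s → HasDerivAt X (u' s / (2 * Real.sqrt (u s))) s := by
    intro s hs
    have hsq := (Real.hasDerivAt_sqrt (ne_of_gt hs)).comp s (hu s)
    have hXe : X = fun r => Real.sqrt (u r) := funext fun r => hX r
    rw [hXe]
    exact hsq.congr_deriv (by ring)
  have hX0 : X 0 = X₀ := by
    rw [hX, hi1, hi2]
    simp [Real.sqrt_sq hX₀.le]
  refine ⟨hX0, ?_, ?_⟩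
  · have hu0 : u 0 = X₀ ^ 2 := by simp [hu_def, hi1, hi2]
    have hupos : 0 < u 0 := by rw [hu0]; positivity
    have := (hXd 0 hupos).deriv
    rw [this, hu0, Real.sqrt_sq hX₀.le]
    simp [hu'_def, hi1, hi1', hi2]
    field_simp
  · intro a b ha hb hpos t ht
    have hut : 0 < u t := hpos t ht
    set V : ℝ → ℝ := fun s => u' s / (2 * Real.sqrt (u s)) with hV_def
    have hev : deriv X =ᶠ[nhds t] V := by
      filter_upwards [isOpen_Ioo.mem_nhds ht] with s hs
      exact (hXd s (hpos s hs)).deriv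
    have hst : 0 < Real.sqrt (u t) := Real.sqrt_pos.mpr hut
    have hden : (2 : ℝ) * Real.sqrt (u t) ≠ 0 := by positivity
    have hsq := (Real.hasDerivAt_sqrt (ne_of_gt hut)).comp t (hu t)
    have hVd : HasDerivAt V
        (((2 * (χ₁' t ^ 2 + χ₂' t ^ 2 / w ^ 2) - 2 * (lam t) ^ 2 * u t)
            * (2 * Real.sqrt (u t))
          - u' t * (2 * (1 / (2 * Real.sqrt (u t)) * u' t)))
          / (2 * Real.sqrt (u t)) ^ 2) t :=
      (hu' t).div (hsq.const_mul 2) hden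
    have hdd : deriv (deriv X) t = ((2 * (χ₁' t ^ 2 + χ₂' t ^ 2 / w ^ 2)
          - 2 * (lam t) ^ 2 * u t) * (2 * Real.sqrt (u t))
          - u' t * (2 * (1 / (2 * Real.sqrt (u t)) * u' t)))
          / (2 * Real.sqrt (u t)) ^ 2 := by
      rw [hev.deriv_eq]; exact hVd.deriv
    have key : 4 * (u t * (χ₁' t ^ 2 + χ₂' t ^ 2 / w ^ 2)) - (u' t) ^ 2 = 4 := by
      have h := hW t
      simp only [hu_def, hu'_def]
      field_simp
      linear_combination (4 * w ^ 2 * (χ₁ t * χ₂' t - χ₂ t * χ₁' t + w)) * h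
    have hs2 : Real.sqrt (u t) ^ 2 = u t := Real.sq_sqrt hut.le
    rw [hdd, hX t]
    have hXt : Real.sqrt (χ₁ t ^ 2 + χ₂ t ^ 2 / w ^ 2) = Real.sqrt (u t) := rfl
    rw [hXt]
    have hs2 : Real.sqrt (u t) ^ 2 = u t := Real.sq_sqrt hut.le
    have hsne : Real.sqrt (u t) ≠ 0 := ne_of_gt hst
    generalize hA : χ₁' t ^ 2 + χ₂' t ^ 2 / w ^ 2 = A at key ⊢
    generalize hB : u' t = B at key ⊢
    generalize hL : lam t = L
    generalize hS : Real.sqrt (u t) = s at hs2 hsne ⊢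
    rw [← hs2] at key ⊢
    field_simp
    ring_nf
    linear_combination key
end

section
/- Let λ : ℝ → ℝ be continuous and let I, V, E : ℝ → ℝ be differentiable functions satisfying the system I' = V, V' = 4E − 2λ(t)²I, E' = −(1/2)λ(t)²V. Then the quantity Q(t) = 2E(t)I(t) − V(t)²/4 is constant in time. -/
/-- The quantity `Q = 2EI − V²/4` is a dynamical invariant of the closed moment system
`I' = V`, `V' = 4E − 2λ(t)²I`, `E' = −(1/2)λ(t)²V`. -/
theorem moment_invariant_Q
    (lam : ℝ → ℝ) (hlam : Continuous lam)
    (I V E : ℝ → ℝ)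
    (hI : ∀ t, HasDerivAt I (V t) t)
    (hV : ∀ t, HasDerivAt V (4 * E t - 2 * (lam t) ^ 2 * I t) t)
    (hE : ∀ t, HasDerivAt E (-(1 / 2) * (lam t) ^ 2 * V t) t) :
    ∀ s t : ℝ, 2 * E s * I s - (V s) ^ 2 / 4 = 2 * E t * I t - (V t) ^ 2 / 4 := by
  have key : ∀ u, HasDerivAt (fun t => 2 * E t * I t - (V t) ^ 2 / 4) 0 u := by
    intro u
    have h := (((hE u).const_mul 2).mul (hI u)).sub (((hV u).mul (hV u)).div_const 4)
    refine (h.congr_deriv (by ring)).congr_of_eventuallyEq (Filter.Eventually.of_forall fun x => ?_)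
    simp only [Pi.mul_apply, Pi.sub_apply]; ring
  have hc := is_const_of_deriv_eq_zero (f := fun t => 2 * E t * I t - (V t) ^ 2 / 4)
    (fun t => (key t).differentiableAt) (fun t => (key t).deriv) 
  intro s t; exact hc s t
end

section
/- Let λ : ℝ → ℝ be continuous and let I, V, E : ℝ → ℝ satisfy I' = V, V' = 4E − 2λ(t)²I, E' = −(1/2)λ(t)²V, with Q = 2EI − V²/4 a nonzero constant and I(t) > 0 for all t. Then the function X(t) = |Q|^{−1/4} I(t)^{1/2} satisfies X'' + λ(t)²X = sgn(Q)/X³. -/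
/-- Reduction of the closed moment system to the Ermakov–Pinney equation:
`X = |Q|^{-1/4} I^{1/2}` satisfies `X'' + λ(t)²X = sgn(Q)/X³`. -/
theorem moment_reduction_ermakov_pinney
    (lam : ℝ → ℝ) (hlam : Continuous lam)
    (I V E : ℝ → ℝ)
    (hI : ∀ t, HasDerivAt I (V t) t)
    (hV : ∀ t, HasDerivAt V (4 * E t - 2 * (lam t) ^ 2 * I t) t)
    (hE : ∀ t, HasDerivAt E (-(1 / 2) * (lam t) ^ 2 * V t) t)
    (Q : ℝ) (hQne : Q ≠ 0)
    (hQ : ∀ t, 2 * E t * I t - (V t) ^ 2 / 4 = Q)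
    (hIpos : ∀ t, 0 < I t)
    (X : ℝ → ℝ) (hX : ∀ t, X t = |Q| ^ (-(1 / 4 : ℝ)) * (I t) ^ ((1 / 2 : ℝ))) :
    ∀ t, deriv (deriv X) t + (lam t) ^ 2 * X t = Real.sign Q / (X t) ^ 3 := by
  intro t
  have hIne : ∀ s, I s ≠ 0 := fun s => (hIpos s).ne'
  set c : ℝ := |Q| ^ (-(1 / 4 : ℝ)) with hc
  have hXfun : X = fun s => c * (I s) ^ ((1 / 2 : ℝ)) := funext hX
  have hX1 : ∀ s, HasDerivAt X (c * (V s * (1/2) * (I s) ^ (-(1/2) : ℝ))) s := by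
    intro s
    rw [hXfun]
    have h := ((hI s).rpow_const (p := (1/2 : ℝ)) (Or.inl (hIne s))).const_mul c
    exact h.congr_deriv (by norm_num)
  have hd1 : deriv X = fun s => c * (V s * (1/2) * (I s) ^ (-(1/2) : ℝ)) :=
    funext fun s => (hX1 s).deriv
  have hX2 : HasDerivAt (deriv X)
      (c * ((4 * E t - 2 * lam t ^ 2 * I t) * (1/2) * (I t) ^ (-(1/2) : ℝ)
        + V t * (1/2) * (V t * (-(1/2)) * (I t) ^ (-(3/2) : ℝ)))) t := by
    rw [hd1]
    have hg := (hI t).rpow_const (p := (-(1/2) : ℝ)) (Or.inl (hIne t))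
    have h := (((hV t).mul_const ((1:ℝ)/2)).mul hg).const_mul c
    exact h.congr_deriv (by norm_num)
  rw [hX2.deriv, hX t]
  -- algebra
  have hIt := hIpos t
  set S : ℝ := (I t) ^ ((1/2) : ℝ) with hS
  have hSpos : 0 < S := Real.rpow_pos_of_pos hIt _
  have hSS : S * S = I t := by
    rw [hS, ← Real.rpow_add hIt]; norm_num
  have p1 : (I t) ^ (-(1/2) : ℝ) = S⁻¹ := by
    rw [Real.rpow_neg hIt.le]
  have p2 : (I t) ^ (-(3/2) : ℝ) = (S * I t)⁻¹ := by
    rw [Real.rpow_neg hIt.le]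
    congr 1
    have h32 : (3/2 : ℝ) = 1/2 + 1 := by norm_num
    rw [hS, h32, Real.rpow_add hIt, Real.rpow_one]
  have hQpos : 0 < |Q| := abs_pos.mpr hQne
  have hcpos : 0 < c := Real.rpow_pos_of_pos hQpos _
  have hc4 : c ^ 4 * |Q| = 1 := by
    rw [hc, ← Real.rpow_natCast (|Q| ^ (-(1/4 : ℝ))) 4, ← Real.rpow_mul hQpos.le]
    norm_num
    rw [Real.rpow_neg_one]
    field_simp
  have hsgn2 : Real.sign Q = c ^ 4 * Q := by
    rcases hQne.lt_or_gt with h | h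
    · rw [Real.sign_of_neg h]
      rw [abs_of_neg h] at hc4
      nlinarith [hc4]
    · rw [Real.sign_of_pos h]
      rw [abs_of_pos h] at hc4
      nlinarith [hc4]
  have hq := hQ t
  rw [p1, p2, hsgn2, ← hq, ← hSS]
  have hSne := hSpos.ne'
  field_simp
  ring
end

section
/- Let n ≥ 1, p > 0, g₀ : ℝ → ℝ positive and differentiable, λ : ℝ → ℝ continuous, and let I, V, K, J, β : ℝ → ℝ be differentiable with I > 0 and satisfy: I' = V, V' = 4(K + (np/4)J) − 2λ²I, K' = −(1/2)λ²V + npβJ, J' = −npβJ + (g₀'/g₀)J, together with the constraint V = 4βI. Then Q₁ := 2KI − V²/4 and Q₂ := (np/(2g₀))·I^{np/4}·J are constant in time. -/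
/-- Invariants of the quadratic-phase moment system for modulated power nonlinearities:
`Q₁ = 2KI − V²/4` and `Q₂ = (np/(2g₀))·I^{np/4}·J` are constant in time. -/
theorem qpa_moment_invariants
    (n : ℕ) (hn : 1 ≤ n) (p : ℝ) (hp : 0 < p)
    (g₀ g₀' : ℝ → ℝ) (hg₀pos : ∀ t, 0 < g₀ t)
    (hg₀ : ∀ t, HasDerivAt g₀ (g₀' t) t)
    (lam : ℝ → ℝ) (hlam : Continuous lam)
    (I V K J β : ℝ → ℝ) (hIpos : ∀ t, 0 < I t)
    (hI : ∀ t, HasDerivAt I (V t) t)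
    (hV : ∀ t, HasDerivAt V (4 * (K t + ((n : ℝ) * p / 4) * J t) - 2 * (lam t) ^ 2 * I t) t)
    (hK : ∀ t, HasDerivAt K (-(1 / 2) * (lam t) ^ 2 * V t + (n : ℝ) * p * β t * J t) t)
    (hJ : ∀ t, HasDerivAt J (-(n : ℝ) * p * β t * J t + (g₀' t / g₀ t) * J t) t)
    (hβ : ∀ t, V t = 4 * β t * I t) :
    ∀ s t : ℝ,
      (2 * K s * I s - (V s) ^ 2 / 4 = 2 * K t * I t - (V t) ^ 2 / 4) ∧
      ((n : ℝ) * p / (2 * g₀ s) * (I s) ^ ((n : ℝ) * p / 4) * J s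
        = (n : ℝ) * p / (2 * g₀ t) * (I t) ^ ((n : ℝ) * p / 4) * J t) := by
  set c : ℝ := (n : ℝ) * p / 4 with hc
  -- First invariant
  have h1 : ∀ t, HasDerivAt (fun t => 2 * K t * I t - V t ^ 2 / 4) 0 t := by
    intro t
    have hA := (((hK t).const_mul 2).mul (hI t)).sub (((hV t).pow 2).div_const 4)
    convert hA using 1
    · rfl
    · rfl
    · rfl
    have hb := hβ t
    linear_combination ((n : ℝ) * p / 2 * J t) * hb
  -- Second invariant (up to a constant factor n*p/2)
  have h2 : ∀ t, HasDerivAt (fun t => I t ^ c * J t / g₀ t) 0 t := by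
    intro t
    have hP : HasDerivAt (fun t => I t ^ c) (V t * c * I t ^ (c - 1)) t :=
      (hI t).rpow_const (Or.inl (hIpos t).ne')
    have hA := (hP.mul (hJ t)).div (hg₀ t) (hg₀pos t).ne'
    convert hA using 1
    · rfl
    · rfl
    · rfl
    have hb := hβ t
    have hr : I t ^ (c - 1) * I t = I t ^ c := by
      rw [← Real.rpow_add_one (hIpos t).ne' (c - 1)]; ring_nf
    have hnp : (n : ℝ) * p = 4 * c := by rw [hc]; ring
    have hg1 : g₀ t * (g₀ t)⁻¹ = 1 := mul_inv_cancel₀ (hg₀pos t).ne'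
    simp only [Pi.mul_apply]
    linear_combination
      (-(c * J t * g₀ t * I t ^ (c - 1)) * hb - (4 * c * β t * J t * g₀ t) * hr
        + (β t * J t * I t ^ c * g₀ t) * hnp) / g₀ t ^ 2
        - (J t * I t ^ c * g₀' t * (g₀ t)⁻¹ ^ 2) * hg1
  intro s t
  have key : ∀ (f : ℝ → ℝ), (∀ x, HasDerivAt f 0 x) → f s = f t := by
    intro f hf
    exact is_const_of_deriv_eq_zero (fun x => (hf x).differentiableAt)
      (fun x => (hf x).deriv) s t
  constructor
  · exact key _ h1
  · have h := key _ h2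
    have hs := (hg₀pos s).ne'
    have ht := (hg₀pos t).ne'
    field_simp at h ⊢
    linear_combination h
end

section
/- Under the hypotheses of the quadratic-phase moment system (I' = V, V' = 4(K + (np/4)J) − 2λ²I, K' = −(1/2)λ²V + npβJ, J' = −npβJ + (g₀'/g₀)J, V = 4βI, I > 0), the function X := I^{1/2} satisfies X'' + λ(t)²X = Q₁/X³ + g₀(t)·Q₂/X^{np/2+1}, where Q₁ = 2KI − V²/4 and Q₂ = (np/(2g₀))I^{np/4}J are the (constant) invariants of the system. -/
/-- Reduction of the quadratic-phase moment system to a generalized Ermakov–Pinney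
equation for the width `X = I^{1/2}`:
`X'' + λ(t)²X = Q₁/X³ + g₀(t)·Q₂/X^{np/2+1}`. -/
theorem qpa_width_equation
    (n : ℕ) (hn : 1 ≤ n) (p : ℝ) (hp : 0 < p)
    (g₀ g₀' : ℝ → ℝ) (hg₀pos : ∀ t, 0 < g₀ t)
    (hg₀ : ∀ t, HasDerivAt g₀ (g₀' t) t)
    (lam : ℝ → ℝ) (hlam : Continuous lam)
    (I V K J β : ℝ → ℝ) (hIpos : ∀ t, 0 < I t)
    (hI : ∀ t, HasDerivAt I (V t) t)
    (hV : ∀ t, HasDerivAt V (4 * (K t + ((n : ℝ) * p / 4) * J t) - 2 * (lam t) ^ 2 * I t) t)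
    (hK : ∀ t, HasDerivAt K (-(1 / 2) * (lam t) ^ 2 * V t + (n : ℝ) * p * β t * J t) t)
    (hJ : ∀ t, HasDerivAt J (-(n : ℝ) * p * β t * J t + (g₀' t / g₀ t) * J t) t)
    (hβ : ∀ t, V t = 4 * β t * I t)
    (Q₁ Q₂ : ℝ)
    (hQ₁ : ∀ t, 2 * K t * I t - (V t) ^ 2 / 4 = Q₁)
    (hQ₂ : ∀ t, (n : ℝ) * p / (2 * g₀ t) * (I t) ^ ((n : ℝ) * p / 4) * J t = Q₂)
    (X : ℝ → ℝ) (hX : ∀ t, X t = (I t) ^ ((1 : ℝ) / 2)) :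
    ∀ t, deriv (deriv X) t + (lam t) ^ 2 * X t
      = Q₁ / (X t) ^ 3 + g₀ t * Q₂ / (X t) ^ ((n : ℝ) * p / 2 + 1) := by
  intro t
  have hXfun : X = fun u => (I u) ^ ((1 : ℝ) / 2) := funext hX
  -- first derivative of X
  have hX1 : ∀ u, HasDerivAt X (V u * (1 / 2) * (I u) ^ ((1 : ℝ) / 2 - 1)) u := by
    intro u
    rw [hXfun]
    exact (hI u).rpow_const (Or.inl (hIpos u).ne')
  have hderivX : deriv X = fun u => V u * (1 / 2) * (I u) ^ ((1 : ℝ) / 2 - 1) :=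
    funext fun u => (hX1 u).deriv
  -- second derivative
  set V' : ℝ := 4 * (K t + ((n : ℝ) * p / 4) * J t) - 2 * (lam t) ^ 2 * I t with hV'
  have h2 : HasDerivAt (deriv X)
      ((V' * (1 / 2)) * (I t) ^ ((1 : ℝ) / 2 - 1)
        + (V t * (1 / 2)) * (V t * ((1 : ℝ) / 2 - 1) * (I t) ^ ((1 : ℝ) / 2 - 1 - 1))) t := by
    rw [hderivX]
    have := ((hV t).mul_const (1 / 2 : ℝ)).mul
      ((hI t).rpow_const (Or.inl (hIpos t).ne') (p := (1 : ℝ) / 2 - 1))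
    exact this
  have hdd : deriv (deriv X) t
      = (V' * (1 / 2)) * (I t) ^ ((1 : ℝ) / 2 - 1)
        + (V t * (1 / 2)) * (V t * ((1 : ℝ) / 2 - 1) * (I t) ^ ((1 : ℝ) / 2 - 1 - 1)) := h2.deriv
  -- abbreviations
  have ha : (0 : ℝ) < I t := hIpos t
  set a : ℝ := I t with haa
  set u : ℝ := a ^ ((1 : ℝ) / 2) with hu_def
  set w : ℝ := a ^ ((n : ℝ) * p / 4) with hw_def
  have hupos : 0 < u := Real.rpow_pos_of_pos ha _
  have hwpos : 0 < w := Real.rpow_pos_of_pos ha _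
  have huu : u * u = a := by
    rw [hu_def, ← Real.rpow_add ha]
    norm_num
  have e1 : a ^ ((1 : ℝ) / 2 - 1) = u / a := by
    rw [show (1 : ℝ) / 2 - 1 = (1 : ℝ) / 2 + (-1) by norm_num, Real.rpow_add ha,
      Real.rpow_neg_one, hu_def]
    ring
  have e2 : a ^ ((1 : ℝ) / 2 - 1 - 1) = u / (a * a) := by
    rw [show (1 : ℝ) / 2 - 1 - 1 = (1 : ℝ) / 2 + (-1) + (-1) by norm_num, Real.rpow_add ha,
      Real.rpow_add ha, Real.rpow_neg_one, hu_def]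
    ring
  have e3 : u ^ ((n : ℝ) * p / 2 + 1) = w * u := by
    rw [hu_def, ← Real.rpow_mul ha.le, show (1 : ℝ) / 2 * ((n : ℝ) * p / 2 + 1)
      = (n : ℝ) * p / 4 + 1 / 2 by ring, Real.rpow_add ha, hw_def]
  have hQ1 := hQ₁ t
  have hQ2 := hQ₂ t
  rw [← haa, ← hw_def] at hQ2
  rw [hdd, hX t, ← haa, ← hu_def, e1, e2, e3, ← hQ1, ← hQ2, hV', ← haa, ← huu]
  have hg : g₀ t ≠ 0 := (hg₀pos t).ne'
  field_simp
  ring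
end

section
/- For the cubic–quintic closure, i.e., moment system I' = V, V' = 4K − 2λ²I − 2nF, K' = −(1/2)λ²V − 2nβF, J' = 2nβF, F' = 2nβ(1 + aF)F + 2nβaJ·J with aF = −4, aJ = −2, constraint V = 4βI and I > 0, the quantities Q₁ = 2KI − V²/4, Q₊ = 2nIⁿ(J + F), Q₋ = 2nI^{n/2}(J + F/2) are conserved, and X := I^{1/2} satisfies X'' + λ(t)²X = Q₁/X³ + Q₋/X^{n+1} − Q₊/X^{2n+1}. -/
/-- Cubic–quintic closure of the quadratic-phase moment system (`aF = −4`, `aJ = −2`):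
`Q₁ = 2KI − V²/4`, `Q₊ = 2nIⁿ(J + F)` and `Q₋ = 2nI^{n/2}(J + F/2)` are conserved, and
the width `X = I^{1/2}` satisfies `X'' + λ(t)²X = Q₁/X³ + Q₋/X^{n+1} − Q₊/X^{2n+1}`. -/
theorem cubic_quintic_moment_system
    (n : ℕ) (hn : 1 ≤ n)
    (lam : ℝ → ℝ) (hlam : Continuous lam)
    (I V K J F β : ℝ → ℝ) (hIpos : ∀ t, 0 < I t)
    (hI : ∀ t, HasDerivAt I (V t) t)
    (hV : ∀ t, HasDerivAt V (4 * K t - 2 * (lam t) ^ 2 * I t - 2 * (n : ℝ) * F t) t)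
    (hK : ∀ t, HasDerivAt K (-(1 / 2) * (lam t) ^ 2 * V t - 2 * (n : ℝ) * β t * F t) t)
    (hJ : ∀ t, HasDerivAt J (2 * (n : ℝ) * β t * F t) t)
    (hF : ∀ t, HasDerivAt F
      (2 * (n : ℝ) * β t * (1 + (-4 : ℝ)) * F t + 2 * (n : ℝ) * β t * (-2 : ℝ) * J t) t)
    (hβ : ∀ t, V t = 4 * β t * I t)
    (X : ℝ → ℝ) (hX : ∀ t, X t = (I t) ^ ((1 : ℝ) / 2)) :
    (∀ s t : ℝ,
      (2 * K s * I s - (V s) ^ 2 / 4 = 2 * K t * I t - (V t) ^ 2 / 4) ∧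
      (2 * (n : ℝ) * (I s) ^ n * (J s + F s) = 2 * (n : ℝ) * (I t) ^ n * (J t + F t)) ∧
      (2 * (n : ℝ) * (I s) ^ ((n : ℝ) / 2) * (J s + F s / 2)
        = 2 * (n : ℝ) * (I t) ^ ((n : ℝ) / 2) * (J t + F t / 2))) ∧
    (∀ t, deriv (deriv X) t + (lam t) ^ 2 * X t
      = (2 * K 0 * I 0 - (V 0) ^ 2 / 4) / (X t) ^ 3
        + (2 * (n : ℝ) * (I 0) ^ ((n : ℝ) / 2) * (J 0 + F 0 / 2)) / (X t) ^ (n + 1)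
        - (2 * (n : ℝ) * (I 0) ^ n * (J 0 + F 0)) / (X t) ^ (2 * n + 1)) := by
  have hXpos : ∀ t, 0 < X t := by
    intro t; rw [hX t]; exact Real.rpow_pos_of_pos (hIpos t) _
  have hXne : ∀ t, X t ≠ 0 := fun t => (hXpos t).ne'
  -- conservation of Q₁
  have hd1 : ∀ t, HasDerivAt (fun t => 2 * K t * I t - (V t) ^ 2 / 4) 0 t := by
    intro t
    have h := (((hK t).const_mul 2).mul (hI t)).sub (((hV t).pow 2).div_const 4)
    refine h.congr_deriv ?_
    linear_combination ((n : ℝ) * F t) * hβ t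
  have hQ1 : ∀ s t : ℝ, 2 * K s * I s - (V s) ^ 2 / 4 = 2 * K t * I t - (V t) ^ 2 / 4 :=
    fun s t => is_const_of_deriv_eq_zero
      (fun x => (hd1 x).differentiableAt) (fun x => (hd1 x).deriv) s t
  -- conservation of Q₊
  have hd2 : ∀ t, HasDerivAt (fun t => 2 * (n : ℝ) * (I t) ^ n * (J t + F t)) 0 t := by
    intro t
    have h := (((hI t).pow n).const_mul (2 * (n : ℝ))).mul ((hJ t).add (hF t))
    refine h.congr_deriv ?_
    simp only [Pi.add_apply, Pi.pow_apply]
    have hpow : I t ^ (n - 1) * I t = I t ^ n := by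
      rw [← pow_succ, Nat.sub_add_cancel hn]
    linear_combination (2 * (n : ℝ) ^ 2 * (J t + F t) * I t ^ (n - 1)) * hβ t
      + (8 * (n : ℝ) ^ 2 * β t * (J t + F t)) * hpow
  have hQp : ∀ s t : ℝ,
      2 * (n : ℝ) * (I s) ^ n * (J s + F s) = 2 * (n : ℝ) * (I t) ^ n * (J t + F t) :=
    fun s t => is_const_of_deriv_eq_zero
      (fun x => (hd2 x).differentiableAt) (fun x => (hd2 x).deriv) s t
  -- conservation of Q₋
  have hd3 : ∀ t, HasDerivAt
      (fun t => 2 * (n : ℝ) * (I t) ^ ((n : ℝ) / 2) * (J t + F t / 2)) 0 t := by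
    intro t
    have h := (((hI t).rpow_const (p := (n : ℝ) / 2) (Or.inl (hIpos t).ne')).const_mul
      (2 * (n : ℝ))).mul ((hJ t).add ((hF t).div_const 2))
    refine h.congr_deriv ?_
    simp only [Pi.add_apply, Pi.pow_apply]
    have hE : I t ^ ((n : ℝ) / 2 - 1) * I t = I t ^ ((n : ℝ) / 2) := by
      have h1 := Real.rpow_add_one (hIpos t).ne' ((n : ℝ) / 2 - 1)
      have h2 : ((n : ℝ) / 2 - 1) + 1 = (n : ℝ) / 2 := by ring
      rw [h2] at h1
      linarith [h1]
    linear_combination ((n : ℝ) ^ 2 * (J t + F t / 2) * I t ^ ((n : ℝ) / 2 - 1)) * hβ t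
      + (4 * (n : ℝ) ^ 2 * β t * (J t + F t / 2)) * hE
  have hQm : ∀ s t : ℝ,
      2 * (n : ℝ) * (I s) ^ ((n : ℝ) / 2) * (J s + F s / 2)
        = 2 * (n : ℝ) * (I t) ^ ((n : ℝ) / 2) * (J t + F t / 2) :=
    fun s t => is_const_of_deriv_eq_zero
      (fun x => (hd3 x).differentiableAt) (fun x => (hd3 x).deriv) s t
  refine ⟨fun s t => ⟨hQ1 s t, hQp s t, hQm s t⟩, ?_⟩
  -- the ODE for X
  have hss : ∀ t, X t * X t = I t := by
    intro t
    rw [hX t, ← Real.rpow_add (hIpos t)]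
    norm_num
  have hX' : ∀ t, HasDerivAt X (V t / (2 * X t)) t := by
    intro t
    have hfun : X = fun t => I t ^ ((1 : ℝ) / 2) := funext hX
    have h := (hI t).rpow_const (p := (1 : ℝ) / 2) (Or.inl (hIpos t).ne')
    rw [hfun]
    convert h using 1
    have hE : I t ^ ((1 : ℝ) / 2 - 1) * I t = I t ^ ((1 : ℝ) / 2) := by
      have h1 := Real.rpow_add_one (hIpos t).ne' ((1 : ℝ) / 2 - 1)
      have h2 : ((1 : ℝ) / 2 - 1) + 1 = (1 : ℝ) / 2 := by ring
      rw [h2] at h1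
      linarith [h1]
    have hst := hss t
    rw [hX t] at hst
    show V t / (2 * I t ^ ((1 : ℝ) / 2)) = V t * (1 / 2) * I t ^ ((1 : ℝ) / 2 - 1)
    have hSne : I t ^ ((1 : ℝ) / 2) ≠ 0 := (Real.rpow_pos_of_pos (hIpos t) _).ne'
    have hES : I t ^ ((1 : ℝ) / 2 - 1) * I t ^ ((1 : ℝ) / 2) = 1 := by
      apply mul_right_cancel₀ hSne
      rw [one_mul, mul_assoc, hst, hE]
    rw [div_eq_iff (by positivity : (2 : ℝ) * I t ^ ((1 : ℝ) / 2) ≠ 0)]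
    linear_combination (-V t) * hES
  have hdd : ∀ t, deriv (deriv X) t =
      ((4 * K t - 2 * (lam t) ^ 2 * I t - 2 * (n : ℝ) * F t) * (2 * X t)
        - V t * (2 * (V t / (2 * X t)))) / (2 * X t) ^ 2 := by
    have h1 : deriv X = fun s => V s / (2 * X s) := funext fun s => (hX' s).deriv
    intro t
    rw [h1]
    exact ((hV t).div ((hX' t).const_mul 2)
      (by simpa using mul_ne_zero two_ne_zero (hXne t))).deriv
  intro t
  rw [hdd t, hQ1 0 t, hQp 0 t, hQm 0 t]
  have hXn1 : X t ^ (n + 1) = I t ^ ((n : ℝ) / 2) * X t := by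
    rw [hX t, ← Real.rpow_natCast (I t ^ ((1 : ℝ) / 2)) (n + 1),
      ← Real.rpow_mul (hIpos t).le, ← Real.rpow_add (hIpos t)]
    congr 1
    push_cast
    ring
  have hX2n1 : X t ^ (2 * n + 1) = I t ^ n * X t := by
    rw [hX t, ← Real.rpow_natCast (I t ^ ((1 : ℝ) / 2)) (2 * n + 1),
      ← Real.rpow_mul (hIpos t).le, ← Real.rpow_natCast (I t) n,
      ← Real.rpow_add (hIpos t)]
    congr 1
    push_cast
    ring
  rw [hXn1, hX2n1]
  have hu : I t ^ ((n : ℝ) / 2) ≠ 0 := (Real.rpow_pos_of_pos (hIpos t) _).ne'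
  have hw : (I t : ℝ) ^ n ≠ 0 := (pow_pos (hIpos t) n).ne'
  have h1 : 2 * (n : ℝ) * (I t) ^ ((n : ℝ) / 2) * (J t + F t / 2)
      / (I t ^ ((n : ℝ) / 2) * X t) = 2 * (n : ℝ) * (J t + F t / 2) / X t := by
    rw [show 2 * (n : ℝ) * (I t) ^ ((n : ℝ) / 2) * (J t + F t / 2)
        = (2 * (n : ℝ) * (J t + F t / 2)) * (I t) ^ ((n : ℝ) / 2) from by ring,
      mul_comm (I t ^ ((n : ℝ) / 2)) (X t),
      mul_div_mul_right (2 * (n : ℝ) * (J t + F t / 2)) (X t) hu]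
  have h2 : 2 * (n : ℝ) * (I t) ^ n * (J t + F t)
      / (I t ^ n * X t) = 2 * (n : ℝ) * (J t + F t) / X t := by
    rw [show 2 * (n : ℝ) * (I t) ^ n * (J t + F t)
        = (2 * (n : ℝ) * (J t + F t)) * (I t) ^ n from by ring,
      mul_comm ((I t) ^ n) (X t),
      mul_div_mul_right (2 * (n : ℝ) * (J t + F t)) (X t) hw]
  rw [h1, h2, ← hss t]
  field_simp [hXne t]
  ring
end
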